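/- For integers k, ℓ with 0 ≤ k, ℓ ≤ n, the matrix identity W̄_{k,ℓ} = ∑_{h=0}^{min{k,ℓ}} (−1)^h q^{binom(h,2)} W_{k,h} W_{h,ℓ} holds, where binom(h,2) = h(h−1)/2. -/
import Mathlib


open Matrix

/-- The matrix `W_{k,ℓ}` on `L(V) × L(V)`: `(W_{k,ℓ})_{x,y} = 1` if `dim x = k`, `dim y = ℓ`
and `dim (x ⊓ y) = min k ℓ`, and `0` otherwise.  (Indices in `ℤ`, so that `W_{-1,0} = 0`.) -/
noncomputable def Wmat (K V : Type*) [Field K] [AddCommGroup V] [Module K V] (k l : ℤ) :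
    Matrix (Submodule K V) (Submodule K V) ℝ :=
  Matrix.of fun x y =>
    if (Module.finrank K x : ℤ) = k ∧ (Module.finrank K y : ℤ) = l ∧
        (Module.finrank K ↥(x ⊓ y) : ℤ) = min k l then 1 else 0

open Classical in
/-- The matrix `W̄_{k,ℓ}`: `(W̄_{k,ℓ})_{x,y} = 1` if `dim x = k`, `dim y = ℓ` and `x ⊓ y = ⊥`,
and `0` otherwise. -/
noncomputable def Wbarmat (K V : Type*) [Field K] [AddCommGroup V] [Module K V] (k l : ℤ) :
    Matrix (Submodule K V) (Submodule K V) ℝ :=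
  Matrix.of fun x y =>
    if (Module.finrank K x : ℤ) = k ∧ (Module.finrank K y : ℤ) = l ∧ x ⊓ y = ⊥ then 1 else 0

namespace WbarAux

open Module Finset

variable {K : Type*} [Field K] [Fintype K]

/-- The Möbius weight `(-1)^h q^{C(h,2)}`. -/
noncomputable def mu (K : Type*) [Fintype K] (h : ℕ) : ℝ :=
  (-1 : ℝ) ^ h * (Fintype.card K : ℝ) ^ (h.choose 2)

lemma mu_zero : mu K 0 = 1 := by simp [mu]

lemma mu_succ (d : ℕ) : mu K (d + 1) = -((Fintype.card K : ℝ) ^ d) * mu K d := by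
  have h2 : (d + 1).choose 2 = d + d.choose 2 := by
    rw [Nat.choose_succ_succ]
    simp [Nat.choose_one_right]
  rw [mu, mu, h2, pow_add, pow_succ]
  ring

section Transfer

variable {W : Type*} [AddCommGroup W] [Module K W] [FiniteDimensional K W]

open Classical in
/-- Transfer a sum over submodules of `W` contained in `p` to a sum over submodules of `p`. -/
lemma sum_le_eq (p : Submodule K W) [Fintype (Submodule K W)] [Fintype (Submodule K ↥p)]
    (f : ℕ → ℝ) :
    ∑ z ∈ Finset.univ.filter (fun z : Submodule K W => z ≤ p), f (finrank K z)
      = ∑ z : Submodule K ↥p, f (finrank K z) := by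
  refine Finset.sum_nbij' (fun z => Submodule.comap p.subtype z)
    (fun w => Submodule.map p.subtype w) ?_ ?_ ?_ ?_ ?_
  · intro z hz; exact Finset.mem_univ _
  · intro wv _; simp only [Finset.mem_filter, Finset.mem_univ, true_and]
    exact Submodule.map_subtype_le _ _
  · intro z hz
    have hzp : z ≤ p := (Finset.mem_filter.mp hz).2
    show Submodule.map p.subtype (Submodule.comap p.subtype z) = z
    rw [Submodule.map_comap_subtype, inf_eq_right.mpr hzp]
  · intro wv _
    exact Submodule.comap_map_eq_of_injective p.injective_subtype wv
  · intro z hz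
    have hzp : z ≤ p := (Finset.mem_filter.mp hz).2
    rw [show finrank K (Submodule.comap p.subtype z) = finrank K z from
      (Submodule.comapSubtypeEquivOfLe hzp).finrank_eq]

end Transfer

open Classical in
/-- Counting subspaces `z` not contained in `H = ker f` with prescribed intersection with `H`:
there are exactly `q ^ (dim H - dim w)` of them. -/
lemma card_fiber {W : Type*} [AddCommGroup W] [Module K W] [FiniteDimensional K W]
    [Fintype (Submodule K W)]
    (f : W →ₗ[K] K) (v₀ : W) (hv₀ : f v₀ = 1) (H : Submodule K W)
    (hH : H = LinearMap.ker f) (w : Submodule K ↥H) :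
    (Finset.univ.filter (fun z : Submodule K W =>
        ¬ z ≤ H ∧ Submodule.comap H.subtype (z ⊓ H) = w)).card
      = Fintype.card K ^ (finrank K H - finrank K w) := by
  classical
  have hfinW : Finite W := Module.finite_of_finite K
  set wW : Submodule K W := Submodule.map H.subtype w with hwW
  have hwH : wW ≤ H := Submodule.map_subtype_le _ _
  have hfH : ∀ a : W, a ∈ H → f a = 0 := fun a ha => LinearMap.mem_ker.mp (hH ▸ ha)
  -- the basic map from `↥H` to submodules of `W`
  set Φ0 : ↥H → Submodule K W := fun u => wW ⊔ (K ∙ (v₀ + (u : W))) with hΦ0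
  have hfvu : ∀ u : ↥H, f (v₀ + (u : W)) = 1 := by
    intro u
    rw [map_add, hv₀, hfH _ u.2, add_zero]
  have hmemΦ : ∀ u : ↥H, v₀ + (u : W) ∈ Φ0 u :=
    fun u => Submodule.mem_sup_right (Submodule.mem_span_singleton_self _)
  have hnle : ∀ u : ↥H, ¬ Φ0 u ≤ H := by
    intro u hle
    have := hfH _ (hle (hmemΦ u))
    rw [hfvu u] at this
    exact one_ne_zero this
  have hinf : ∀ u : ↥H, Φ0 u ⊓ H = wW := by
    intro u
    apply le_antisymm
    · rintro x ⟨hx1, hx2⟩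
      rcases Submodule.mem_sup.mp hx1 with ⟨a, ha, b, hb, rfl⟩
      rcases Submodule.mem_span_singleton.mp hb with ⟨c, rfl⟩
      have hfx : f (a + c • (v₀ + (u : W))) = c := by
        rw [map_add, _root_.map_smul, hfvu u, hfH _ (hwH ha), smul_eq_mul, mul_one, zero_add]
      have hc : c = 0 := by rw [← hfx]; exact hfH _ hx2
      subst hc
      simpa using ha
    · exact le_inf le_sup_left hwH
  have hcomapΦ : ∀ u : ↥H, Submodule.comap H.subtype (Φ0 u ⊓ H) = w := by
    intro u
    rw [hinf u, hwW, Submodule.comap_map_eq_of_injective H.injective_subtype]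
  -- membership in `wW` transfers
  have hmem_wW : ∀ a : ↥H, (a : W) ∈ wW → a ∈ w := by
    intro a ha
    rcases Submodule.mem_map.mp ha with ⟨b, hb, hba⟩
    have : b = a := Subtype.ext hba
    rwa [← this]
  -- `Φ0` respects the coset relation
  have hcongr : ∀ a b : ↥H, a - b ∈ w → Φ0 a = Φ0 b := by
    intro a b hab
    have key : ∀ x y : ↥H, x - y ∈ w → Φ0 x ≤ Φ0 y := by
      intro x y hxy
      apply sup_le le_sup_left
      rw [Submodule.span_le, Set.singleton_subset_iff]
      have h1 : ((x : W) - (y : W)) ∈ wW :=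
        Submodule.mem_map.mpr ⟨x - y, hxy, rfl⟩
      have : v₀ + (x : W) = ((x : W) - (y : W)) + (v₀ + (y : W)) := by abel
      rw [this]
      exact Submodule.add_mem _ (Submodule.mem_sup_left h1) (hmemΦ y)
    have hba : b - a ∈ w := by simpa using Submodule.neg_mem _ hab
    exact le_antisymm (key a b hab) (key b a hba)
  -- injectivity
  have hinj : ∀ a b : ↥H, Φ0 a = Φ0 b → a - b ∈ w := by
    intro a b hab
    have hmem : v₀ + (a : W) ∈ Φ0 b := hab ▸ hmemΦ a
    rcases Submodule.mem_sup.mp hmem with ⟨x, hx, y, hy, hxy⟩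
    rcases Submodule.mem_span_singleton.mp hy with ⟨c, rfl⟩
    have hfc : c = 1 := by
      have h := congrArg f hxy
      rw [map_add, _root_.map_smul, hfvu a, hfvu b, hfH _ (hwH hx), smul_eq_mul,
        mul_one, zero_add] at h
      exact h
    rw [hfc, one_smul] at hxy
    have hx' : (a : W) - (b : W) ∈ wW := by
      have hxv : (a : W) - (b : W) = x := by
        rw [eq_sub_of_add_eq hxy]; abel
      rwa [hxv]
    exact hmem_wW (a - b) (by simpa using hx')
  -- surjectivity
  have hsurj : ∀ z : Submodule K W, ¬ z ≤ H →
      Submodule.comap H.subtype (z ⊓ H) = w → ∃ u : ↥H, Φ0 u = z := by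
    intro z hzle hzw
    have hzinf : z ⊓ H = wW := by
      have := congrArg (Submodule.map H.subtype) hzw
      rwa [Submodule.map_comap_subtype, inf_eq_right.mpr inf_le_right] at this
    rcases SetLike.not_le_iff_exists.mp hzle with ⟨v, hvz, hvH⟩
    have hfv : f v ≠ 0 := fun h => hvH (hH ▸ LinearMap.mem_ker.mpr h)
    set v' : W := (f v)⁻¹ • v with hv'
    have hv'z : v' ∈ z := Submodule.smul_mem _ _ hvz
    have hfv' : f v' = 1 := by
      rw [hv', _root_.map_smul, smul_eq_mul, inv_mul_cancel₀ hfv]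
    have hu : v' - v₀ ∈ H := by
      have : f (v' - v₀) = 0 := by rw [map_sub, hfv', hv₀, sub_self]
      rw [hH]
      exact LinearMap.mem_ker.mpr this
    refine ⟨⟨v' - v₀, hu⟩, ?_⟩
    apply le_antisymm
    · apply sup_le
      · rw [← hzinf]; exact inf_le_left
      · rw [Submodule.span_le, Set.singleton_subset_iff]
        have : v₀ + (v' - v₀) = v' := by abel
        simpa [this] using hv'z
    · intro x hxz
      have h1 : x - f x • v' ∈ z := Submodule.sub_mem _ hxz (Submodule.smul_mem _ _ hv'z)
      have h2 : x - f x • v' ∈ H := by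
        have : f (x - f x • v') = 0 := by
          rw [map_sub, _root_.map_smul, hfv', smul_eq_mul, mul_one, sub_self]
        rw [hH]
        exact LinearMap.mem_ker.mpr this
      have h3 : x - f x • v' ∈ wW := hzinf ▸ Submodule.mem_inf.mpr ⟨h1, h2⟩
      have hco : ((⟨v' - v₀, hu⟩ : ↥H) : W) = v' - v₀ := rfl
      have hx : x = (x - f x • v') + f x • (v₀ + ((⟨v' - v₀, hu⟩ : ↥H) : W)) := by
        rw [hco]; module
      rw [hx]
      exact Submodule.add_mem _ (Submodule.mem_sup_left h3)
        (Submodule.mem_sup_right (Submodule.smul_mem _ _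
          (Submodule.mem_span_singleton_self _)))
  -- now build the equivalence with the quotient
  haveI : Finite ↥H := inferInstance
  haveI : Finite (↥H ⧸ w) := Quotient.finite _
  haveI : Fintype (↥H ⧸ w) := Fintype.ofFinite _
  have hcard : (Finset.univ.filter (fun z : Submodule K W =>
      ¬ z ≤ H ∧ Submodule.comap H.subtype (z ⊓ H) = w)).card = Fintype.card (↥H ⧸ w) := by
    rw [← Fintype.card_coe]
    refine (Fintype.card_congr (Equiv.ofBijective ?_ ⟨?_, ?_⟩)).symm
    · refine fun q => Quotient.liftOn q (fun u =>
        (⟨Φ0 u, ?_⟩ : {z // z ∈ Finset.univ.filter (fun z : Submodule K W =>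
          ¬ z ≤ H ∧ Submodule.comap H.subtype (z ⊓ H) = w)})) ?_
      · simp only [Finset.mem_filter, Finset.mem_univ, true_and]
        exact ⟨hnle u, by rw [hcomapΦ u]⟩
      · intro a b hab
        exact Subtype.ext (hcongr a b ((Submodule.quotientRel_def w).mp hab))
    · intro q1 q2 h
      induction q1 using Quotient.ind
      induction q2 using Quotient.ind
      rename_i a b
      have : Φ0 a = Φ0 b := congrArg Subtype.val h
      exact (Submodule.Quotient.eq w).mpr (hinj a b this)
    · rintro ⟨z, hz⟩
      simp only [Finset.mem_filter, Finset.mem_univ, true_and] at hz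
      rcases hsurj z hz.1 hz.2 with ⟨u, hu⟩
      exact ⟨Submodule.Quotient.mk u, Subtype.ext hu⟩
  rw [hcard, card_eq_pow_finrank (K := K) (V := ↥H ⧸ w)]
  congr 1
  have := Submodule.finrank_quotient_add_finrank w
  omega

open Classical in
/-- The key identity: the alternating sum of `mu` over all subspaces of a finite dimensional
space over a finite field vanishes unless the space is zero. -/
theorem key (m : ℕ) : ∀ (W : Type u) [AddCommGroup W] [Module K W] [FiniteDimensional K W]
    [Fintype (Submodule K W)], finrank K W = m →
    (∑ z : Submodule K W, mu K (finrank K z)) = if m = 0 then 1 else 0 := by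
  induction m using Nat.strong_induction_on with
  | _ m IH =>
  intro W _ _ _ _ hm
  have hfinW : Finite W := Module.finite_of_finite K
  cases m with
  | zero =>
    haveI : Subsingleton W := finrank_zero_iff.mp hm
    rw [if_pos rfl]
    rw [Finset.sum_eq_single_of_mem ⊥ (Finset.mem_univ _)
      (fun b _ hb => absurd (Subsingleton.elim b ⊥) hb)]
    rw [finrank_bot, mu_zero]
  | succ m' =>
    have hW : finrank K W = m' + 1 := hm
    obtain ⟨b⟩ : Nonempty (Basis (Fin (m' + 1)) K W) := ⟨Module.finBasisOfFinrankEq K W hW⟩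
    set f : W →ₗ[K] K := b.coord 0 with hfdef
    have hv₀ : f (b 0) = 1 := by simp [hfdef]
    set H : Submodule K W := LinearMap.ker f with hHdef
    have hrange : LinearMap.range f = ⊤ := by
      rw [LinearMap.range_eq_top]
      intro c
      exact ⟨c • b 0, by rw [_root_.map_smul, hv₀, smul_eq_mul, mul_one]⟩
    have hHrank : finrank K H = m' := by
      have h1 := LinearMap.finrank_range_add_finrank_ker f
      rw [hrange, finrank_top, finrank_self, hW, ← hHdef] at h1
      omega
    haveI : Finite (Submodule K ↥H) := Finite.of_injective _ SetLike.coe_injective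
    haveI : Fintype (Submodule K ↥H) := Fintype.ofFinite _
    rw [← Finset.sum_filter_add_sum_filter_not Finset.univ (fun z : Submodule K W => z ≤ H)]
    have hS1 : ∑ z ∈ Finset.univ.filter (fun z : Submodule K W => z ≤ H),
        mu K (finrank K z) = if m' = 0 then 1 else 0 := by
      rw [sum_le_eq H (mu K)]
      exact IH m' (Nat.lt_succ_self m') ↥H hHrank
    have hdim : ∀ z : Submodule K W, ¬ z ≤ H →
        finrank K z = finrank K (Submodule.comap H.subtype (z ⊓ H)) + 1 := by
      intro z hz
      have hsup : z ⊔ H = ⊤ := by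
        rcases SetLike.not_le_iff_exists.mp hz with ⟨v, hvz, hvH⟩
        have hfv : f v ≠ 0 := fun h => hvH (LinearMap.mem_ker.mpr h)
        rw [eq_top_iff]
        intro x _
        have hv'z : (f v)⁻¹ • v ∈ z := Submodule.smul_mem _ _ hvz
        have hfv' : f ((f v)⁻¹ • v) = 1 := by
          rw [_root_.map_smul, smul_eq_mul, inv_mul_cancel₀ hfv]
        have h2 : x - f x • ((f v)⁻¹ • v) ∈ H := LinearMap.mem_ker.mpr (by
          rw [map_sub, _root_.map_smul, hfv', smul_eq_mul, mul_one, sub_self])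
        have hxe : x = f x • ((f v)⁻¹ • v) + (x - f x • ((f v)⁻¹ • v)) := by abel
        rw [hxe]
        exact Submodule.add_mem _
          (Submodule.mem_sup_left (Submodule.smul_mem _ _ hv'z))
          (Submodule.mem_sup_right h2)
      have hq := Submodule.finrank_sup_add_finrank_inf_eq z H
      rw [hsup, finrank_top, hW, hHrank] at hq
      have hc : finrank K (Submodule.comap H.subtype (z ⊓ H)) = finrank K ↥(z ⊓ H) :=
        (Submodule.comapSubtypeEquivOfLe inf_le_right).finrank_eq
      omega
    have hS2 : ∑ z ∈ Finset.univ.filter (fun z : Submodule K W => ¬ z ≤ H),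
        mu K (finrank K z)
        = -((Fintype.card K : ℝ) ^ m') * (if m' = 0 then 1 else 0) := by
      have step1 : ∑ z ∈ Finset.univ.filter (fun z : Submodule K W => ¬ z ≤ H),
          mu K (finrank K z)
          = ∑ z ∈ Finset.univ.filter (fun z : Submodule K W => ¬ z ≤ H),
            mu K (finrank K (Submodule.comap H.subtype (z ⊓ H)) + 1) :=
        Finset.sum_congr rfl fun z hz => by rw [hdim z (Finset.mem_filter.mp hz).2]
      rw [step1, ← Finset.sum_fiberwise
        (Finset.univ.filter fun z : Submodule K W => ¬ z ≤ H)
        (fun z => Submodule.comap H.subtype (z ⊓ H))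
        (fun z => mu K (finrank K (Submodule.comap H.subtype (z ⊓ H)) + 1))]
      have step2 : ∀ wq : Submodule K ↥H,
          (∑ z ∈ (Finset.univ.filter fun z : Submodule K W => ¬ z ≤ H).filter
              (fun z => Submodule.comap H.subtype (z ⊓ H) = wq),
            mu K (finrank K (Submodule.comap H.subtype (z ⊓ H)) + 1))
          = -((Fintype.card K : ℝ) ^ m') * mu K (finrank K wq) := by
        intro wq
        have hle : finrank K wq ≤ m' := hHrank ▸ Submodule.finrank_le wq
        rw [Finset.filter_filter]
        have hconst :
            (∑ z ∈ Finset.univ.filter (fun z : Submodule K W =>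
                ¬ z ≤ H ∧ Submodule.comap H.subtype (z ⊓ H) = wq),
              mu K (finrank K (Submodule.comap H.subtype (z ⊓ H)) + 1))
            = ∑ z ∈ Finset.univ.filter (fun z : Submodule K W =>
                ¬ z ≤ H ∧ Submodule.comap H.subtype (z ⊓ H) = wq),
              mu K (finrank K wq + 1) :=
          Finset.sum_congr rfl fun z hz => by rw [(Finset.mem_filter.mp hz).2.2]
        rw [hconst]
        rw [Finset.sum_const, card_fiber f (b 0) hv₀ H hHdef wq, hHrank]
        rw [nsmul_eq_mul, mu_succ]
        push_cast
        have hpow : (Fintype.card K : ℝ) ^ (m' - finrank K wq)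
            * (Fintype.card K : ℝ) ^ (finrank K wq) = (Fintype.card K : ℝ) ^ m' := by
          rw [← pow_add, Nat.sub_add_cancel hle]
        calc ((Fintype.card K : ℝ) ^ (m' - finrank K wq))
              * (-((Fintype.card K : ℝ) ^ finrank K wq) * mu K (finrank K wq))
            = -((Fintype.card K : ℝ) ^ (m' - finrank K wq)
                * (Fintype.card K : ℝ) ^ (finrank K wq)) * mu K (finrank K wq) := by ring
          _ = -((Fintype.card K : ℝ) ^ m') * mu K (finrank K wq) := by rw [hpow]
      rw [Finset.sum_congr rfl fun wq _ => step2 wq, ← Finset.mul_sum,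
        IH m' (Nat.lt_succ_self m') ↥H hHrank]
    rw [hS1, hS2]
    by_cases hm0 : m' = 0 <;> simp [hm0]

open Classical in
theorem key' {W : Type u} [AddCommGroup W] [Module K W] [FiniteDimensional K W]
    [Fintype (Submodule K W)] (p : Submodule K W) :
    (∑ z ∈ Finset.univ.filter (fun z : Submodule K W => z ≤ p), mu K (finrank K z))
      = if p = ⊥ then 1 else 0 := by
  have hfinW : Finite W := Module.finite_of_finite K
  haveI : Finite (Submodule K ↥p) := Finite.of_injective _ SetLike.coe_injective
  haveI : Fintype (Submodule K ↥p) := Fintype.ofFinite _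
  rw [sum_le_eq p (mu K), key (finrank K ↥p) ↥p rfl]
  simp only [Submodule.finrank_eq_zero]

end WbarAux

/-- For `0 ≤ k, ℓ ≤ n`: `W̄_{k,ℓ} = ∑_{h=0}^{min(k,ℓ)} (-1)^h q^{C(h,2)} W_{k,h} W_{h,ℓ}`. -/
theorem Wbarmat_eq_sum
    {K V : Type*} [Field K] [Fintype K] [AddCommGroup V] [Module K V] [FiniteDimensional K V]
    [Fintype (Submodule K V)]
    (n k l : ℕ) (hV : Module.finrank K V = n) (hkn : k ≤ n) (hln : l ≤ n) :
    Wbarmat K V k l =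
      ∑ h ∈ Finset.range (min k l + 1),
        ((-1 : ℝ) ^ h * (Fintype.card K : ℝ) ^ (h.choose 2)) • (Wmat K V k h * Wmat K V h l) := by
  classical
  ext x y
  rw [Matrix.sum_apply]
  simp only [Matrix.smul_apply, Matrix.mul_apply, smul_eq_mul, Wmat, Wbarmat, Matrix.of_apply]
  by_cases hx : (Module.finrank K ↥x : ℤ) = (k : ℤ)
  case neg => simp [hx]
  by_cases hy : (Module.finrank K ↥y : ℤ) = (l : ℤ)
  case neg => simp [hy]
  -- main case
  have hxk : Module.finrank K ↥x = k := by exact_mod_cast hx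
  have hyl : Module.finrank K ↥y = l := by exact_mod_cast hy
  have hxyk : Module.finrank K ↥(x ⊓ y) ≤ min k l := by
    have h1 : Module.finrank K ↥(x ⊓ y) ≤ Module.finrank K ↥x :=
      Submodule.finrank_mono inf_le_left
    have h2 : Module.finrank K ↥(x ⊓ y) ≤ Module.finrank K ↥y :=
      Submodule.finrank_mono inf_le_right
    omega
  -- Step A: evaluate the inner sums as cardinalities
  have hsum : ∀ h : ℕ, h ≤ k → h ≤ l →
      (∑ z : Submodule K V,
        (if (Module.finrank K ↥x : ℤ) = (k : ℤ) ∧ (Module.finrank K ↥z : ℤ) = (h : ℤ) ∧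
            (Module.finrank K ↥(x ⊓ z) : ℤ) = min (k : ℤ) (h : ℤ) then (1 : ℝ) else 0) *
        (if (Module.finrank K ↥z : ℤ) = (h : ℤ) ∧ (Module.finrank K ↥y : ℤ) = (l : ℤ) ∧
            (Module.finrank K ↥(z ⊓ y) : ℤ) = min (h : ℤ) (l : ℤ) then (1 : ℝ) else 0))
      = ((Finset.univ.filter (fun z : Submodule K V =>
          z ≤ x ⊓ y ∧ Module.finrank K ↥z = h)).card : ℝ) := by
    intro h hhk hhl
    have hminkh : min (k : ℤ) (h : ℤ) = (h : ℤ) := min_eq_right (by exact_mod_cast hhk)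
    have hminhl : min (h : ℤ) (l : ℤ) = (h : ℤ) := min_eq_left (by exact_mod_cast hhl)
    rw [← Finset.sum_boole]
    apply Finset.sum_congr rfl
    intro z _
    rw [ite_zero_mul_ite_zero, one_mul]
    have hiff : (((Module.finrank K ↥x : ℤ) = (k : ℤ) ∧ (Module.finrank K ↥z : ℤ) = (h : ℤ) ∧
            (Module.finrank K ↥(x ⊓ z) : ℤ) = min (k : ℤ) (h : ℤ)) ∧
          ((Module.finrank K ↥z : ℤ) = (h : ℤ) ∧ (Module.finrank K ↥y : ℤ) = (l : ℤ) ∧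
            (Module.finrank K ↥(z ⊓ y) : ℤ) = min (h : ℤ) (l : ℤ)))
        ↔ (z ≤ x ⊓ y ∧ Module.finrank K ↥z = h) := by
      constructor
      · rintro ⟨⟨-, hz1, hxz⟩, -, -, hzy⟩
        have hz : Module.finrank K ↥z = h := by exact_mod_cast hz1
        rw [hminkh] at hxz
        rw [hminhl] at hzy
        have hxz' : Module.finrank K ↥(x ⊓ z) = h := by exact_mod_cast hxz
        have hzy' : Module.finrank K ↥(z ⊓ y) = h := by exact_mod_cast hzy
        have e1 : x ⊓ z = z :=
          Submodule.eq_of_le_of_finrank_eq inf_le_right (by rw [hxz', hz])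
        have e2 : z ⊓ y = z :=
          Submodule.eq_of_le_of_finrank_eq inf_le_left (by rw [hzy', hz])
        exact ⟨le_inf (inf_eq_right.mp e1) (inf_eq_left.mp e2), hz⟩
      · rintro ⟨hzxy, hz⟩
        have hzx : z ≤ x := hzxy.trans inf_le_left
        have hzy : z ≤ y := hzxy.trans inf_le_right
        refine ⟨⟨hx, by exact_mod_cast hz, ?_⟩, by exact_mod_cast hz, hy, ?_⟩
        · rw [inf_eq_right.mpr hzx, hminkh]; exact_mod_cast hz
        · rw [inf_eq_left.mpr hzy, hminhl]; exact_mod_cast hz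
    rw [if_congr hiff rfl rfl]
  have step1 : (∑ h ∈ Finset.range (min k l + 1),
        ((-1 : ℝ) ^ h * (Fintype.card K : ℝ) ^ (h.choose 2)) *
        ∑ z : Submodule K V,
          (if (Module.finrank K ↥x : ℤ) = (k : ℤ) ∧ (Module.finrank K ↥z : ℤ) = (h : ℤ) ∧
              (Module.finrank K ↥(x ⊓ z) : ℤ) = min (k : ℤ) (h : ℤ) then (1 : ℝ) else 0) *
          (if (Module.finrank K ↥z : ℤ) = (h : ℤ) ∧ (Module.finrank K ↥y : ℤ) = (l : ℤ) ∧
              (Module.finrank K ↥(z ⊓ y) : ℤ) = min (h : ℤ) (l : ℤ) then (1 : ℝ) else 0))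
      = ∑ h ∈ Finset.range (min k l + 1), WbarAux.mu K h *
          ((Finset.univ.filter (fun z : Submodule K V =>
            z ≤ x ⊓ y ∧ Module.finrank K ↥z = h)).card : ℝ) := by
    apply Finset.sum_congr rfl
    intro h hh
    have hh' : h ≤ min k l := Nat.lt_succ_iff.mp (Finset.mem_range.mp hh)
    rw [hsum h (hh'.trans (min_le_left k l)) (hh'.trans (min_le_right k l))]
    rfl
  have step2 : (∑ h ∈ Finset.range (min k l + 1), WbarAux.mu K h *
        ((Finset.univ.filter (fun z : Submodule K V =>
          z ≤ x ⊓ y ∧ Module.finrank K ↥z = h)).card : ℝ))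
      = ∑ z ∈ Finset.univ.filter (fun z : Submodule K V => z ≤ x ⊓ y),
          WbarAux.mu K (Module.finrank K ↥z) := by
    have hin : ∀ h ∈ Finset.range (min k l + 1), WbarAux.mu K h *
        ((Finset.univ.filter (fun z : Submodule K V =>
          z ≤ x ⊓ y ∧ Module.finrank K ↥z = h)).card : ℝ)
        = ∑ z ∈ Finset.univ.filter (fun z : Submodule K V => z ≤ x ⊓ y),
            (if Module.finrank K ↥z = h then WbarAux.mu K h else 0) := by
      intro h _
      rw [Finset.sum_ite, Finset.sum_const_zero, add_zero, Finset.sum_const,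
        Finset.filter_filter, nsmul_eq_mul, mul_comm]
    rw [Finset.sum_congr rfl hin, Finset.sum_comm]
    apply Finset.sum_congr rfl
    intro z hz
    have hzf : Module.finrank K ↥z ≤ min k l :=
      le_trans (Submodule.finrank_mono (Finset.mem_filter.mp hz).2) hxyk
    rw [Finset.sum_ite_eq, if_pos (Finset.mem_range.mpr (Nat.lt_succ_of_le hzf))]
  rw [step1, step2, WbarAux.key' (x ⊓ y)]
  simp [hx, hy]
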